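/- Let τ, δt > 0, L(t) = e^{-t·δt/τ}, V_th > 0, w > 0, and t ∈ ℕ with t ≥ 1. Suppose x : ℕ → ℝ satisfies x(t) > 0 and x(i) < 0 for all i < t, and that f(i) := Σ_{k=0}^{i} w·x(k)·L(i-k) satisfies f(i) < 0 for all i < t and f(t) ∈ (0,1). Then, using the surrogate derivative ∂g/∂u = 1 on (0,1) and 0 elsewhere, the partial derivative ∂u_Ni(t)/∂w of the NiLIF membrane potential u_Ni(t) = f(t) − Σ_{i=0}^{t-1} g(f(i))·V_th·L(t-1-i) with respect to w equals Σ_{i=0}^{t} x(i)·L(t-i), which is nonzero. -/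

import Mathlib

/-- Constructive part of Proposition 3: under the stated sign conditions the NiLIF
membrane potential is differentiable in `w` with derivative `Σ_{i=0}^{t} x(i)·L(t-i) ≠ 0`. -/
theorem nilif_gradient_nonvanishing (τ δt Vth : ℝ) (hτ : 0 < τ) (hδt : 0 < δt) (hVth : 0 < Vth)
    (L : ℕ → ℝ) (hL : ∀ s, L s = Real.exp (-((s : ℝ) * δt) / τ))
    (g : ℝ → ℝ) (hg : ∀ a, g a = if Vth < a then 1 else 0)
    (w : ℝ) (hw : 0 < w) (x : ℕ → ℝ) (t : ℕ) (ht : 1 ≤ t)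
    (hxt : 0 < x t) (hxneg : ∀ i < t, x i < 0)
    (hfneg : ∀ i < t, (∑ k ∈ Finset.range (i + 1), w * x k * L (i - k)) < 0)
    (hft : (∑ k ∈ Finset.range (t + 1), w * x k * L (t - k)) ∈ Set.Ioo (0 : ℝ) 1) :
    HasDerivAt (fun w' : ℝ =>
        (∑ k ∈ Finset.range (t + 1), w' * x k * L (t - k)) -
          ∑ i ∈ Finset.range t,
            g (∑ k ∈ Finset.range (i + 1), w' * x k * L (i - k)) * Vth * L (t - 1 - i))
      (∑ i ∈ Finset.range (t + 1), x i * L (t - i)) w ∧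
    (∑ i ∈ Finset.range (t + 1), x i * L (t - i)) ≠ 0 := by
  have key : ∀ w' : ℝ, ∀ i : ℕ,
      (∑ k ∈ Finset.range (i + 1), w' * x k * L (i - k))
        = w' * ∑ k ∈ Finset.range (i + 1), x k * L (i - k) := by
    intro w' i
    rw [Finset.mul_sum]
    exact Finset.sum_congr rfl (fun k _ => by ring)
  have hSpos : 0 < ∑ i ∈ Finset.range (t + 1), x i * L (t - i) := by
    have h := hft.1
    rw [key] at h
    nlinarith [h, hw]
  have hcneg : ∀ i < t, (∑ k ∈ Finset.range (i + 1), x k * L (i - k)) < 0 := by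
    intro i hi
    have h := hfneg i hi
    rw [key] at h
    nlinarith [h, hw]
  constructor
  · have h1 : HasDerivAt (fun w' : ℝ =>
        (∑ k ∈ Finset.range (t + 1), w' * x k * L (t - k)) - 0)
        (∑ i ∈ Finset.range (t + 1), x i * L (t - i)) w := by
      have : HasDerivAt (fun w' : ℝ =>
          ∑ k ∈ Finset.range (t + 1), w' * x k * L (t - k))
          (∑ i ∈ Finset.range (t + 1), x i * L (t - i)) w := by
        apply HasDerivAt.fun_sum
        intro k _
        simpa [mul_assoc] using (hasDerivAt_id w).mul_const (x k * L (t - k))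
      simpa using this.sub_const 0
    apply h1.congr_of_eventuallyEq
    have hmem : Set.Ioi (0:ℝ) ∈ nhds w := isOpen_Ioi.mem_nhds hw
    filter_upwards [hmem] with w' hw'
    have : ∀ i ∈ Finset.range t,
        g (∑ k ∈ Finset.range (i + 1), w' * x k * L (i - k)) * Vth * L (t - 1 - i) = 0 := by
      intro i hi
      have hi' := Finset.mem_range.mp hi
      have hneg : (∑ k ∈ Finset.range (i + 1), w' * x k * L (i - k)) < 0 := by
        rw [key]
        exact mul_neg_of_pos_of_neg hw' (hcneg i hi')
      rw [hg, if_neg (by linarith)]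
      ring
    rw [Finset.sum_congr rfl this]
    simp
  · exact ne_of_gt hSpos
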